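/- Let A be an n×n real matrix and let u_1, …, u_{j+p} be orthonormal vectors in ℝⁿ such that for each 1 ≤ ℓ ≤ j there exist real scalars h_{i,ℓ} with A u_ℓ = Σ_{i=1}^{ℓ+p} h_{i,ℓ} u_i and h_{ℓ+p,ℓ} ≠ 0. Write j = (k−1)p + m with k ≥ 1 and 0 ≤ m < p, and let F be the n×p matrix with columns u_1,…,u_p. Then the banded Krylov subspace has full dimension: dim K_{k,m}(A, F) = kp + m = j + p. -/

import Mathlib

open Matrix

/-- The Krylov subspace `K_k(A,v) = span {x, Av, …, A^{k-1} v}`. -/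
def krylov {n : ℕ} (A : Matrix (Fin n) (Fin n) ℝ) (v : Fin n → ℝ) (k : ℕ) :
    Submodule ℝ (Fin n → ℝ) :=
  Submodule.span ℝ {x | ∃ i < k, x = (A ^ i).mulVec v}

def bandedKrylov {n p : ℕ} (A : Matrix (Fin n) (Fin n) ℝ) (F : Matrix (Fin n) (Fin p) ℝ)
    (k m : ℕ) : Submodule ℝ (Fin n → ℝ) :=
  ⨆ l : Fin p, krylov A (fun r => F r l) (if (l : ℕ) < m then k + 1 else k)

private lemma sum_dotProduct' {ι N : Type*} [Fintype N] (s : Finset ι) (f : ι → N → ℝ)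
    (v : N → ℝ) : (∑ i ∈ s, f i) ⬝ᵥ v = ∑ i ∈ s, f i ⬝ᵥ v := by
  simp only [dotProduct, Finset.sum_apply, Finset.sum_mul]
  exact Finset.sum_comm

/-- If `u_1, …, u_{j+p}` are orthonormal vectors satisfying the banded Lanczos recurrences
`A u_ℓ = Σ_{i=1}^{ℓ+p} h_{i,ℓ} u_i` with `h_{ℓ+p,ℓ} ≠ 0` for all `ℓ ≤ j` (no breakdown),
and `j = (k-1)p + m` with `k ≥ 1`, `0 ≤ m < p`, then the banded Krylov subspace
`K_{k,m}(A, F)` (with `F` having columns `u_1, …, u_p`) has full dimension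
`kp + m = j + p`. -/
theorem banded_lanczos_dimension {n j p k m : ℕ} (hk : 1 ≤ k) (hm : m < p)
    (hj : j = (k - 1) * p + m)
    (A : Matrix (Fin n) (Fin n) ℝ) (u : Fin (j + p) → Fin n → ℝ)
    (hortho : ∀ i l : Fin (j + p), u i ⬝ᵥ u l = if i = l then 1 else 0)
    (hrec : ∀ l : Fin j, ∃ h : Fin (j + p) → ℝ,
      A.mulVec (u (Fin.castAdd p l)) =
          ∑ i ∈ Finset.univ.filter (fun i : Fin (j + p) => (i : ℕ) ≤ (l : ℕ) + p),
            h i • u i ∧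
        h ⟨(l : ℕ) + p, by omega⟩ ≠ 0) :
    Module.finrank ℝ
        (bandedKrylov A (Matrix.of fun r (l : Fin p) => u (Fin.castLE (by omega) l) r) k m) =
        k * p + m ∧
      k * p + m = j + p := by
  have hp : 0 < p := lt_of_le_of_lt (Nat.zero_le m) hm
  obtain ⟨k', rfl⟩ : ∃ k', k = k' + 1 := ⟨k - 1, by omega⟩
  have hj' : j = k' * p + m := by simpa using hj
  have hkp : (k' + 1) * p + m = (k' * p + m) + p := by ring
  have hN : (k' + 1) * p + m = j + p := by rw [hkp, ← hj']
  refine ⟨?_, hN⟩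
  -- the family w t = A^(t/p) u_{t%p}
  have hmodlt : ∀ t : ℕ, t % p < j + p :=
    fun t => lt_of_lt_of_le (Nat.mod_lt t hp) (Nat.le_add_left p j)
  set w : Fin (j + p) → Fin n → ℝ :=
    fun t => (A ^ ((t : ℕ) / p)).mulVec (u ⟨(t : ℕ) % p, hmodlt t⟩) with hwdef
  set E : ℕ → Submodule ℝ (Fin n → ℝ) :=
    fun t => Submodule.span ℝ (u '' {s : Fin (j + p) | (s : ℕ) < t}) with hEdef
  have hEleU : ∀ t, E t ≤ Submodule.span ℝ (Set.range u) := by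
    intro t
    apply Submodule.span_mono
    rintro x ⟨s, _, rfl⟩
    exact ⟨s, rfl⟩
  -- A maps E s into E (s + p) for s ≤ j
  have HA : ∀ s : ℕ, s ≤ j → ∀ v ∈ E s, A.mulVec v ∈ E (s + p) := by
    intro s hs v hv
    induction hv using Submodule.span_induction with
    | mem x hx =>
        obtain ⟨i, hi, rfl⟩ := hx
        have hij : (i : ℕ) < j := lt_of_lt_of_le hi hs
        set l : Fin j := ⟨(i : ℕ), hij⟩ with hl
        obtain ⟨h, heq, hne⟩ := hrec l
        have hcast : Fin.castAdd p l = i := by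
          apply Fin.ext; rw [hl]; rfl
        rw [hcast] at heq
        rw [heq]
        apply Submodule.sum_mem
        intro r hr
        simp only [Finset.mem_filter, Finset.mem_univ, true_and] at hr
        refine Submodule.smul_mem _ _ (Submodule.subset_span ⟨r, ?_, rfl⟩)
        simp only [Set.mem_setOf_eq]
        have hle : (l : ℕ) = (i : ℕ) := by rw [hl]
        have hi' : (i : ℕ) < s := hi
        omega
    | zero => rw [Matrix.mulVec_zero]; exact Submodule.zero_mem _
    | add x y _ _ hx hy => rw [Matrix.mulVec_add]; exact Submodule.add_mem _ hx hy
    | smul c x _ hx => rw [Matrix.mulVec_smul]; exact Submodule.smul_mem _ _ hx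
  -- triangularity
  have htri : ∀ t : ℕ, ∀ ht : t < j + p,
      ∃ c : ℝ, c ≠ 0 ∧ w ⟨t, ht⟩ - c • u ⟨t, ht⟩ ∈ E t := by
    intro t
    induction t using Nat.strong_induction_on with
    | _ t IH =>
      intro ht
      by_cases htp : t < p
      · refine ⟨1, one_ne_zero, ?_⟩
        have h1 : t / p = 0 := Nat.div_eq_of_lt htp
        have h2 : (⟨t % p, hmodlt t⟩ : Fin (j + p)) = ⟨t, ht⟩ :=
          Fin.ext (Nat.mod_eq_of_lt htp)
        have hw : w ⟨t, ht⟩ = u ⟨t, ht⟩ := by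
          simp only [hwdef, h1, h2, pow_zero, Matrix.one_mulVec]
        rw [hw]
        simp only [one_smul, sub_self]
        exact Submodule.zero_mem _
      · obtain ⟨s, rfl⟩ : ∃ s, t = s + p := ⟨t - p, by omega⟩
        have hsN : s < j + p := by omega
        have hsj : s < j := by omega
        obtain ⟨c', hc', hvmem⟩ := IH s (by omega) hsN
        have hdiv : (s + p) / p = s / p + 1 := Nat.add_div_right s hp
        have hmod : (⟨(s + p) % p, hmodlt (s + p)⟩ : Fin (j + p))
            = ⟨s % p, hmodlt s⟩ := Fin.ext (Nat.add_mod_right s p)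
        have hwstep : w ⟨s + p, ht⟩ = A.mulVec (w ⟨s, hsN⟩) := by
          simp only [hwdef, hdiv, hmod, pow_succ', Matrix.mulVec_mulVec]
        obtain ⟨h, heq, hne⟩ := hrec ⟨s, hsj⟩
        have hcast : Fin.castAdd p (⟨s, hsj⟩ : Fin j) = (⟨s, hsN⟩ : Fin (j + p)) := by
          apply Fin.ext; rfl
        rw [hcast] at heq
        set tt : Fin (j + p) := ⟨s + p, ht⟩ with htt
        have hne' : h tt ≠ 0 := hne
        set d := w ⟨s, hsN⟩ - c' • u ⟨s, hsN⟩ with hd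
        have hws : w ⟨s, hsN⟩ = c' • u ⟨s, hsN⟩ + d := by rw [hd]; abel
        have htmem : tt ∈ Finset.univ.filter (fun i : Fin (j + p) => (i : ℕ) ≤ s + p) := by
          simp [htt]
        have hsplit : A.mulVec (u ⟨s, hsN⟩)
            = h tt • u tt + ∑ i ∈ (Finset.univ.filter
                (fun i : Fin (j + p) => (i : ℕ) ≤ s + p)).erase tt, h i • u i := by
          rw [heq, ← Finset.add_sum_erase _ _ htmem]
        have key : w ⟨s + p, ht⟩ - (c' * h tt) • u tt
            = c' • (∑ i ∈ (Finset.univ.filter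
                (fun i : Fin (j + p) => (i : ℕ) ≤ s + p)).erase tt, h i • u i)
              + A.mulVec d := by
          rw [hwstep, hws, Matrix.mulVec_add, Matrix.mulVec_smul, hsplit, smul_add, smul_smul]
          abel
        refine ⟨c' * h tt, mul_ne_zero hc' hne', ?_⟩
        rw [key]
        refine Submodule.add_mem _ (Submodule.smul_mem _ _ ?_) (HA s hsj.le d hvmem)
        apply Submodule.sum_mem
        intro r hr
        simp only [Finset.mem_erase, Finset.mem_filter, Finset.mem_univ, true_and] at hr
        refine Submodule.smul_mem _ _ (Submodule.subset_span ⟨r, ?_, rfl⟩)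
        simp only [Set.mem_setOf_eq]
        have : (r : ℕ) ≠ s + p := fun hh => hr.1 (Fin.ext hh)
        omega
  -- banded Krylov space is the span of the w's
  have hKw : bandedKrylov A (Matrix.of fun r (l : Fin p) => u (Fin.castLE (by omega) l) r)
      (k' + 1) m = Submodule.span ℝ (Set.range w) := by
    unfold bandedKrylov krylov
    rw [← Submodule.span_iUnion]
    congr 1
    ext x
    simp only [Set.mem_iUnion, Set.mem_setOf_eq, Set.mem_range]
    constructor
    · rintro ⟨l, i, hi, rfl⟩
      have hlb : (l : ℕ) < m → i < k' + 2 := fun h => by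
        simp [h] at hi; omega
      have hlb' : ¬ (l : ℕ) < m → i < k' + 1 := fun h => by
        simpa [h] using hi
      have hmul : p * i ≤ p * (k' + 1) := by
        apply Nat.mul_le_mul_left
        by_cases hcase : (l : ℕ) < m
        · omega
        · have := hlb' hcase; omega
      have htlt : p * i + (l : ℕ) < j + p := by
        have h2 : p * (k' + 1) = p * k' + p := by ring
        have h3 : k' * p = p * k' := Nat.mul_comm _ _
        have h4 : (l : ℕ) < p := l.isLt
        by_cases hcase : (l : ℕ) < m
        · -- i ≤ k' + 1, l < m
          nlinarith [hlb hcase, Nat.mul_le_mul_left p (Nat.lt_succ_iff.mp (hlb hcase))]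
        · have hik : i ≤ k' := Nat.lt_succ_iff.mp (hlb' hcase)
          have : p * i ≤ p * k' := Nat.mul_le_mul_left p hik
          omega
      refine ⟨⟨p * i + (l : ℕ), htlt⟩, ?_⟩
      have hdd : (p * i + (l : ℕ)) / p = i := by
        rw [Nat.mul_add_div hp, Nat.div_eq_of_lt l.isLt, Nat.add_zero]
      have hmm : (⟨(p * i + (l : ℕ)) % p, hmodlt _⟩ : Fin (j + p))
          = ⟨(l : ℕ), by omega⟩ := by
        apply Fin.ext
        simp only [Nat.mul_add_mod]
        exact Nat.mod_eq_of_lt l.isLt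
      simp only [hwdef, hdd, hmm]
      rfl
    · rintro ⟨t, rfl⟩
      have hdm := Nat.div_add_mod (t : ℕ) p
      have htN : (t : ℕ) < j + p := t.isLt
      refine ⟨⟨(t : ℕ) % p, Nat.mod_lt _ hp⟩, (t : ℕ) / p, ?_, ?_⟩
      · by_cases hcase : (t : ℕ) % p < m
        · simp only [hcase, if_pos]
          by_contra hcon
          push_neg at hcon
          have h1 : p * (k' + 2) ≤ p * ((t : ℕ) / p) := Nat.mul_le_mul_left p (by omega)
          have h2 : p * ((t : ℕ) / p) + (t : ℕ) % p = (t : ℕ) := Nat.div_add_mod _ p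
          have h5 : p * (k' + 2) = k' * p + p + p := by ring
          omega
        · simp only [hcase, if_neg, not_false_iff]
          by_contra hcon
          push_neg at hcon
          have h1 : p * (k' + 1) ≤ p * ((t : ℕ) / p) := Nat.mul_le_mul_left p hcon
          have h2 : p * ((t : ℕ) / p) + (t : ℕ) % p = (t : ℕ) := Nat.div_add_mod _ p
          have h5 : p * (k' + 1) = k' * p + p := by ring
          omega
      · simp only [hwdef]
        rfl
  -- span w = span u
  have hwu : Submodule.span ℝ (Set.range w) = Submodule.span ℝ (Set.range u) := by
    apply le_antisymm
    · rw [Submodule.span_le]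
      rintro x ⟨t, rfl⟩
      obtain ⟨c, hc, hmem⟩ := htri (t : ℕ) t.isLt
      have ht' : (⟨(t : ℕ), t.isLt⟩ : Fin (j + p)) = t := Fin.eta t t.isLt
      rw [ht'] at hmem
      have h1 : u t ∈ Submodule.span ℝ (Set.range u) := Submodule.subset_span ⟨t, rfl⟩
      have h2 := Submodule.add_mem _ (Submodule.smul_mem _ c h1) (hEleU _ hmem)
      have h3 : c • u t + (w t - c • u t) = w t := by abel
      rwa [h3] at h2
    · rw [Submodule.span_le]
      rintro x ⟨t, rfl⟩
      suffices H : ∀ tv : ℕ, ∀ htv : tv < j + p,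
          u ⟨tv, htv⟩ ∈ Submodule.span ℝ (Set.range w) by
        have := H (t : ℕ) t.isLt
        rwa [Fin.eta] at this
      intro tv
      induction tv using Nat.strong_induction_on with
      | _ tv IH =>
        intro htv
        obtain ⟨c, hc, hmem⟩ := htri tv htv
        have hEw : E tv ≤ Submodule.span ℝ (Set.range w) := by
          simp only [hEdef]
          rw [Submodule.span_le]
          rintro y ⟨s, hs, rfl⟩
          simp only [Set.mem_setOf_eq] at hs
          have := IH (s : ℕ) hs s.isLt
          rwa [Fin.eta] at this
        have hwmem : w ⟨tv, htv⟩ ∈ Submodule.span ℝ (Set.range w) :=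
          Submodule.subset_span ⟨_, rfl⟩
        have h1 := Submodule.sub_mem _ hwmem (hEw hmem)
        have h2 : w ⟨tv, htv⟩ - (w ⟨tv, htv⟩ - c • u ⟨tv, htv⟩) = c • u ⟨tv, htv⟩ := by abel
        rw [h2] at h1
        have h3 := Submodule.smul_mem _ c⁻¹ h1
        rwa [smul_smul, inv_mul_cancel₀ hc, one_smul] at h3
  -- linear independence of u
  have hli : LinearIndependent ℝ u := by
    rw [Fintype.linearIndependent_iff]
    intro g hg i
    have h0 := congrArg (fun v => v ⬝ᵥ u i) hg
    simp only [sum_dotProduct', smul_dotProduct, zero_dotProduct, hortho,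
      smul_eq_mul, mul_ite, mul_one, mul_zero, Finset.sum_ite_eq', Finset.mem_univ,
      if_pos] at h0
    exact h0
  have hcard : Module.finrank ℝ (Submodule.span ℝ (Set.range u)) = j + p := by
    rw [finrank_span_eq_card hli, Fintype.card_fin]
  rw [hKw, hwu, hcard]
  omega
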